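/- Slab form of the box feasibility condition (precise version of Theorem 4.2): fix an index M ∈ {1,…,n} and let δ_B > 0. Then the condition "for all ζ ∈ ℝⁿ with |ζ_M| ≤ δ_B, ((δ_B μ⁽⁰⁾ + Σ_{j=1}^n ζⱼ μ⁽ʲ⁾)ᵀ x)² ≥ τ² δ_B²" holds if and only if there exists λ ≥ 0 such that the matrix A − λ(e₀e₀ᵀ − e_M e_Mᵀ) — i.e. A with λ subtracted from the (0,0)-entry and λ added to the (M,M)-entry — is positive semidefinite. -/

import Mathlib

open Matrix

noncomputable section

/-- `a j = (μ⁽ʲ⁾)ᵀ x`, the dot product of the `j`-th expected-return vector with `x`. -/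
def avec (n : ℕ) (x : Fin n → ℝ) (μ : Fin (n + 1) → Fin n → ℝ) : Fin (n + 1) → ℝ :=
  fun j => μ j ⬝ᵥ x

/-- The symmetric matrix `A = a aᵀ - τ² e₀ e₀ᵀ`. -/
def Amat (n : ℕ) (x : Fin n → ℝ) (τ : ℝ) (μ : Fin (n + 1) → Fin n → ℝ) :
    Matrix (Fin (n + 1)) (Fin (n + 1)) ℝ :=
  Matrix.of fun i j =>
    avec n x μ i * avec n x μ j - if i = 0 ∧ j = 0 then τ ^ 2 else 0

/-- The matrix `B⁽ᴱ⁾ = diag(1, -1, …, -1)`. -/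
def BE (n : ℕ) : Matrix (Fin (n + 1)) (Fin (n + 1)) ℝ :=
  Matrix.diagonal fun i => if i = 0 then 1 else -1

/-- The matrix `B⁽ᴾ⁾ = e₀e₀ᵀ - J`: `(0,0)`-entry `1`, entries `-1` for `i, j ≥ 1`,
zero elsewhere. -/
def BP (n : ℕ) : Matrix (Fin (n + 1)) (Fin (n + 1)) ℝ :=
  Matrix.of fun i j =>
    if i = 0 ∧ j = 0 then 1 else if i ≠ 0 ∧ j ≠ 0 then -1 else 0

/-- A real matrix is positive semidefinite: `zᵀ M z ≥ 0` for all `z`. -/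
def IsPSD {d : ℕ} (M : Matrix (Fin d) (Fin d) ℝ) : Prop :=
  ∀ z : Fin d → ℝ, 0 ≤ z ⬝ᵥ M *ᵥ z

lemma qform_eq (n : ℕ) (x : Fin n → ℝ) (τ lam : ℝ) (μ : Fin (n + 1) → Fin n → ℝ)
    (M : Fin n) (z : Fin (n + 1) → ℝ) :
    z ⬝ᵥ (Amat n x τ μ - lam • (Matrix.single (0 : Fin (n+1)) 0 (1:ℝ) -
        Matrix.single M.succ M.succ 1)) *ᵥ z
    = (∑ i, avec n x μ i * z i)^2 - τ^2 * (z 0)^2 - lam * ((z 0)^2 - (z M.succ)^2) := by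
  set a := avec n x μ
  simp only [dotProduct, Matrix.mulVec, Matrix.sub_apply, Matrix.smul_apply,
    Amat, Matrix.of_apply, Matrix.single, smul_eq_mul, dotProduct]
  simp only [sub_mul, mul_sub, Finset.sum_sub_distrib, ite_mul, zero_mul, one_mul, mul_ite,
    mul_zero, mul_one]
  have h1 : (∑ i, a i * z i)^2 = ∑ i : Fin (n+1), z i * ∑ j : Fin (n+1), a i * a j * z j := by
    rw [sq, Finset.sum_mul_sum]
    refine Finset.sum_congr rfl fun i _ => ?_
    rw [Finset.mul_sum]
    exact Finset.sum_congr rfl fun j _ => by ring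
  rw [h1]
  simp only [ite_and]
  have e1 : ∀ x : Fin (n+1),
      (∑ x1 : Fin (n+1), if x = 0 then if x1 = 0 then τ^2 * z x1 else 0 else 0)
      = if x = 0 then τ^2 * z 0 else 0 := fun x => by
    by_cases hx : x = 0 <;> simp [hx]
  have e2 : ∀ x : Fin (n+1),
      (∑ x1 : Fin (n+1), if 0 = x then if 0 = x1 then lam * z x1 else 0 else 0)
      = if 0 = x then lam * z 0 else 0 := fun x => by
    by_cases hx : (0 : Fin (n+1)) = x
    · subst hx; simp
    · simp [hx]
  have e3 : ∀ x : Fin (n+1),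
      (∑ x1 : Fin (n+1), if M.succ = x then if M.succ = x1 then lam * z x1 else 0 else 0)
      = if M.succ = x then lam * z M.succ else 0 := fun x => by
    by_cases hx : M.succ = x
    · subst hx; simp
    · simp [hx]
  simp only [e1, e2, e3, mul_ite, mul_zero]
  simp only [Finset.sum_ite_eq, Finset.sum_ite_eq', Finset.mem_univ, if_true]
  ring


set_option maxHeartbeats 2000000 in
/-- Slab form of the box feasibility condition (precise version of Theorem 4.2): for a
fixed index `M ∈ {1, …, n}` (encoded as `M : Fin n`, corresponding to row/column `M.succ`
of the `(n+1) × (n+1)` matrices), the condition over the slab `|ζ_M| ≤ δ_B` holds iff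
there is `λ ≥ 0` with `A - λ (e₀e₀ᵀ - e_M e_Mᵀ)` positive semidefinite. -/
theorem feasibility_box_slab (n : ℕ) (hn : 1 ≤ n) (x : Fin n → ℝ) (τ : ℝ)
    (μ : Fin (n + 1) → Fin n → ℝ) (M : Fin n) (δB : ℝ) (hδB : 0 < δB) :
    (∀ ζ : Fin n → ℝ, |ζ M| ≤ δB →
        τ ^ 2 * δB ^ 2 ≤ ((δB • μ 0 + ∑ j : Fin n, ζ j • μ j.succ) ⬝ᵥ x) ^ 2) ↔
      ∃ lam : ℝ, 0 ≤ lam ∧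
        IsPSD (Amat n x τ μ -
          lam • (Matrix.single (0 : Fin (n + 1)) (0 : Fin (n + 1)) (1 : ℝ) -
            Matrix.single M.succ M.succ (1 : ℝ))) := by
  set a := avec n x μ with ha
  have hdot : ∀ ζ : Fin n → ℝ,
      (δB • μ 0 + ∑ j : Fin n, ζ j • μ j.succ) ⬝ᵥ x
      = δB * a 0 + ∑ j : Fin n, ζ j * a j.succ := by
    intro ζ
    simp only [dotProduct, Pi.add_apply, Pi.smul_apply, Finset.sum_apply,
      smul_eq_mul, add_mul, Finset.sum_add_distrib, Finset.sum_mul]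
    rw [Finset.sum_comm]
    simp only [ha, avec, dotProduct, Finset.mul_sum]
    congr 1
    · exact Finset.sum_congr rfl fun k _ => by ring
    · exact Finset.sum_congr rfl fun j _ => Finset.sum_congr rfl fun k _ => by ring
  constructor
  · intro h
    -- specialize to single-coordinate perturbations
    have hsingle : ∀ (j : Fin n) (c : ℝ), |(Pi.single j c : Fin n → ℝ) M| ≤ δB →
        τ ^ 2 * δB ^ 2 ≤ (δB * a 0 + c * a j.succ) ^ 2 := by
      intro j c hc
      have := h (Pi.single j c) hc
      rw [hdot] at this
      simpa [Pi.single_apply, Finset.sum_ite_eq', Finset.mem_univ] using this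
    by_cases hτ : τ = 0
    · refine ⟨0, le_refl 0, fun z => ?_⟩
      rw [qform_eq]
      simp [hτ]
      positivity
    · -- τ ≠ 0 case
      have hτ2 : 0 < τ ^ 2 := by positivity
      have hδB2 : 0 < δB ^ 2 := by positivity
      -- off coordinates vanish
      have hzero : ∀ j : Fin n, j ≠ M → a j.succ = 0 := by
        intro j hj
        by_contra hne
        have hsm : |(Pi.single j (-(δB * a 0) / a j.succ) : Fin n → ℝ) M| ≤ δB := by
          rw [Pi.single_apply]
          simp [Ne.symm hj, le_of_lt hδB]
        have := hsingle j _ hsm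
        rw [div_mul_cancel₀ _ hne] at this
        simp at this
        nlinarith
      set b := a M.succ with hb
      -- the one-dimensional slab condition
      have h2 : ∀ s : ℝ, |s| ≤ δB → τ ^ 2 * δB ^ 2 ≤ (δB * a 0 + s * b) ^ 2 := by
        intro s hs
        have hsm : |(Pi.single M s : Fin n → ℝ) M| ≤ δB := by simpa using hs
        exact hsingle M s hsm
      by_cases hb0 : b = 0
      · -- lam = 0 works
        have h00 : τ ^ 2 ≤ (a 0) ^ 2 := by
          have := h2 0 (by simp [le_of_lt hδB])
          nlinarith
        refine ⟨0, le_refl 0, fun z => ?_⟩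
        rw [qform_eq]
        have hsum : (∑ i, a i * z i) = a 0 * z 0 := by
          rw [Fin.sum_univ_succ]
          have : ∀ j : Fin n, a j.succ * z j.succ = 0 := by
            intro j
            by_cases hj : j = M
            · subst hj; rw [← hb, hb0]; ring
            · rw [hzero j hj]; ring
          simp [this]
        rw [hsum]
        nlinarith [sq_nonneg (z 0)]
      · -- b ≠ 0 : first show |b| < |a 0|
        have hblt : |b| < |a 0| := by
          by_contra hle
          push_neg at hle
          have hb' : b ≠ 0 := hb0
          have habs : |(-(δB * a 0) / b)| ≤ δB := by
            rw [abs_div, abs_neg, abs_mul, abs_of_pos hδB]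
            rw [div_le_iff₀ (abs_pos.mpr hb')]
            nlinarith [abs_nonneg (a 0), abs_pos.mpr hb']
          have := h2 _ habs
          rw [div_mul_cancel₀ _ hb0] at this
          simp at this
          nlinarith
        have ha0 : a 0 ≠ 0 := by
          intro h0
          rw [h0] at hblt
          simp at hblt
          exact hb0 (abs_eq_zero.mp (le_antisymm (le_of_lt hblt) (abs_nonneg b)))
        have hp := h2 δB (by rw [abs_of_pos hδB])
        have hm := h2 (-δB) (by rw [abs_neg, abs_of_pos hδB])
        have hkey : τ ^ 2 ≤ (|a 0| - |b|) ^ 2 := by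
          rcases abs_cases (a 0) with ⟨e1, _⟩ | ⟨e1, _⟩ <;>
            rcases abs_cases b with ⟨e2, _⟩ | ⟨e2, _⟩ <;> rw [e1, e2] <;>
            nlinarith [hp, hm, hδB2]
        have ht : |τ| ≤ |a 0| - |b| := by
          have h1 : |τ| ^ 2 ≤ (|a 0| - |b|) ^ 2 := by rw [sq_abs]; exact hkey
          nlinarith [abs_nonneg τ, sub_nonneg.mpr (le_of_lt hblt)]
        -- lam = |τ| * |b|
        refine ⟨|τ| * |b|, mul_nonneg (abs_nonneg τ) (abs_nonneg b), fun z => ?_⟩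
        rw [qform_eq]
        have hsum : (∑ i, a i * z i) = a 0 * z 0 + b * z M.succ := by
          rw [Fin.sum_univ_succ]
          congr 1
          rw [Finset.sum_eq_single M]
          · intro j _ hj; rw [hzero j hj]; ring
          · intro hM; exact absurd (Finset.mem_univ M) hM
        rw [hsum]
        set u := z 0
        set s := z M.succ
        set t := |τ| with htdef
        set β := |b| with hβdef
        have ht0 : (0:ℝ) ≤ t := abs_nonneg τ
        have hβ0 : (0:ℝ) ≤ β := abs_nonneg b
        have htt : t ^ 2 = τ ^ 2 := sq_abs τ
        have hbb : β ^ 2 = b ^ 2 := sq_abs b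
        have hab : t + β ≤ |a 0| := by linarith
        have hsq : (t + β) ^ 2 ≤ (a 0) ^ 2 := by
          nlinarith [mul_nonneg (sub_nonneg.mpr hab)
            (by positivity : (0:ℝ) ≤ |a 0| + t + β), sq_abs (a 0)]
        have hb2 : 0 < b ^ 2 + t * β := by
          have : 0 < b ^ 2 := by positivity
          nlinarith [mul_nonneg ht0 hβ0]
        have h3 : 0 ≤ t * β * (a 0 ^ 2 - t ^ 2 - b ^ 2 - 2 * t * β) := by
          apply mul_nonneg (mul_nonneg ht0 hβ0)
          nlinarith [hsq, hbb]
        have hcQ : 0 ≤ (b ^ 2 + t * β) *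
            ((a 0 * u + b * s) ^ 2 - t ^ 2 * u ^ 2 - t * β * (u ^ 2 - s ^ 2)) := by
          have hid : (b ^ 2 + t * β) *
              ((a 0 * u + b * s) ^ 2 - t ^ 2 * u ^ 2 - t * β * (u ^ 2 - s ^ 2))
              = (a 0 * b * u + (b ^ 2 + t * β) * s) ^ 2
                + t * β * (a 0 ^ 2 - t ^ 2 - b ^ 2 - 2 * t * β) * u ^ 2
                + t ^ 2 * (β ^ 2 - b ^ 2) * u ^ 2 := by ring
          rw [hid, hbb]
          have h4 : 0 ≤ t * β * (a 0 ^ 2 - t ^ 2 - b ^ 2 - 2 * t * β) * u ^ 2 :=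
            mul_nonneg h3 (sq_nonneg u)
          nlinarith [sq_nonneg (a 0 * b * u + (b ^ 2 + t * β) * s)]
        rw [← htt]
        nlinarith [hcQ, hb2]
  · rintro ⟨lam, hlam, hpsd⟩ ζ hζ
    have := hpsd (Fin.cons δB ζ)
    rw [qform_eq] at this
    simp only [Fin.cons_zero, Fin.cons_succ] at this
    rw [hdot ζ]
    have hsum : (∑ i, a i * (Fin.cons δB ζ : Fin (n+1) → ℝ) i)
        = δB * a 0 + ∑ j : Fin n, ζ j * a j.succ := by
      rw [Fin.sum_univ_succ]
      simp only [Fin.cons_zero, Fin.cons_succ]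
      rw [mul_comm]
      congr 1
      exact Finset.sum_congr rfl fun j _ => mul_comm _ _
    rw [hsum] at this
    have hslack : 0 ≤ lam * (δB ^ 2 - (ζ M) ^ 2) := by
      apply mul_nonneg hlam
      nlinarith [sq_abs (ζ M), abs_nonneg (ζ M)]
    nlinarith
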